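/- Let t satisfy 0 < t < π/3 and 5cos t − 3 > 0. Then the envelope points ξ₁(t) = (√(5cos t − 3)/(2√(cos t + 1)), −2 sin t/(cos t + 1)) and ξ₂(t) = (−√(5cos t − 3)/(2√(cos t + 1)), −2 sin t/(cos t + 1)) lie on the Brocard circle 𝒦_t; that is, each satisfies x² + (y − (cos t − 2)/(2 sin t))² = ((2cos t − 1)/(2 sin t))². -/

import Mathlib

open Real

theorem stmt_14 (t : ℝ) (ht0 : 0 < t) (ht1 : t < Real.pi / 3)
    (ht2 : 0 < 5 * Real.cos t - 3)
    (x₁ x₂ y : ℝ)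
    (hx₁ : x₁ = Real.sqrt (5 * Real.cos t - 3) / (2 * Real.sqrt (Real.cos t + 1)))
    (hx₂ : x₂ = -(Real.sqrt (5 * Real.cos t - 3) / (2 * Real.sqrt (Real.cos t + 1))))
    (hy : y = -(2 * Real.sin t / (Real.cos t + 1))) :
    x₁ ^ 2 + (y - (Real.cos t - 2) / (2 * Real.sin t)) ^ 2 =
        ((2 * Real.cos t - 1) / (2 * Real.sin t)) ^ 2 ∧
    x₂ ^ 2 + (y - (Real.cos t - 2) / (2 * Real.sin t)) ^ 2 =
        ((2 * Real.cos t - 1) / (2 * Real.sin t)) ^ 2 := by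
  have hs : 0 < Real.sin t := Real.sin_pos_of_pos_of_lt_pi ht0
    (lt_of_lt_of_le ht1 (by linarith [Real.pi_pos]))
  have hc : 0 < Real.cos t + 1 := by nlinarith [Real.neg_one_le_cos t]
  have hx2 : x₁ ^ 2 = (5 * Real.cos t - 3) / (4 * (Real.cos t + 1)) := by
    rw [hx₁, div_pow, mul_pow, Real.sq_sqrt ht2.le, Real.sq_sqrt hc.le]
    ring_nf
  have hx2' : x₂ ^ 2 = x₁ ^ 2 := by rw [hx₁, hx₂]; ring
  have hpy : Real.sin t ^ 2 = 1 - Real.cos t ^ 2 := by nlinarith [Real.sin_sq_add_cos_sq t]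
  have key : x₁ ^ 2 + (y - (Real.cos t - 2) / (2 * Real.sin t)) ^ 2 =
      ((2 * Real.cos t - 1) / (2 * Real.sin t)) ^ 2 := by
    rw [hx2, hy]
    field_simp
    linear_combination (64 * Real.sin t ^ 2 + 64 * (1 - Real.cos t ^ 2)
      + 4 * (Real.cos t + 1) * (13 * Real.cos t - 19)) * hpy
  exact ⟨key, by rw [hx2']; exact key⟩
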